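/- (EUCP property.) Let X ⊆ I be a 2-itemset (|X| = 2) with TWU(X) < MIU(X), i.e., X is not an HTWUI. Then every k-itemset Y (k ≥ 3) obtained from X by appending items whose mu values are at least those of all items in X (i.e., X ⊆ Y and mu(j) ≥ mu(i) for every j ∈ Y \ X and i ∈ X) is neither an HTWUI nor an HUI: TWU(Y) < MIU(Y) and u(Y) < MIU(Y). -/
import Mathlib


open Finset

variable {ι τ : Type*}

/-- Utility of item `i` in transaction `t`: quantity times unit profit. -/
def itemU (pr : ι → ℝ) (q : ι → τ → ℕ) (i : ι) (t : τ) : ℝ :=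
  (q i t : ℝ) * pr i

/-- Utility of itemset `X` in transaction `t`. -/
def setU (pr : ι → ℝ) (q : ι → τ → ℕ) (X : Finset ι) (t : τ) : ℝ :=
  ∑ i ∈ X, itemU pr q i t

/-- Transaction utility of transaction `t` (with item set `Tr t`). -/
def tu (pr : ι → ℝ) (q : ι → τ → ℕ) (Tr : τ → Finset ι) (t : τ) : ℝ :=
  ∑ i ∈ Tr t, itemU pr q i t

/-- Transaction-weighted utility of itemset `X` in database `D`. -/
def TWU [DecidableEq ι] (pr : ι → ℝ) (q : ι → τ → ℕ) (Tr : τ → Finset ι)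
    (D : Finset τ) (X : Finset ι) : ℝ :=
  ∑ t ∈ D.filter (fun t => X ⊆ Tr t), tu pr q Tr t

/-- Utility of itemset `X` in database `D`. -/
def dbU [DecidableEq ι] (pr : ι → ℝ) (q : ι → τ → ℕ) (Tr : τ → Finset ι)
    (D : Finset τ) (X : Finset ι) : ℝ :=
  ∑ t ∈ D.filter (fun t => X ⊆ Tr t), setU pr q X t

/-- Minimum itemset utility of a nonempty itemset `X`. -/
def MIU (mu : ι → ℝ) (X : Finset ι) (hX : X.Nonempty) : ℝ :=
  X.inf' hX mu

/-- Remaining utility of itemset `X` in transaction `t`: total utility of the items of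
`Tr t` that come strictly after every item of `X`. -/
def ru [LinearOrder ι] (pr : ι → ℝ) (q : ι → τ → ℕ) (Tr : τ → Finset ι)
    (X : Finset ι) (t : τ) : ℝ :=
  ∑ i ∈ (Tr t).filter (fun i => ∀ x ∈ X, x < i), itemU pr q i t

/-- Sum of the remaining utilities of itemset `X` over the database `D` (`X.RU`). -/
def dbRU [LinearOrder ι] (pr : ι → ℝ) (q : ι → τ → ℕ) (Tr : τ → Finset ι)
    (D : Finset τ) (X : Finset ι) : ℝ :=
  ∑ t ∈ D.filter (fun t => X ⊆ Tr t), ru pr q Tr X t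

/-- EUCP property. If a 2-itemset `X` is not an HTWUI, then every
`k`-itemset (`k ≥ 3`) obtained from `X` by appending items of `mu` value at least those of
all items of `X` is neither an HTWUI nor an HUI. -/
theorem EUCP_property [DecidableEq ι] (I : Finset ι) (pr mu : ι → ℝ)
    (hpr : ∀ i, 0 ≤ pr i) (hmu : ∀ i, 0 < mu i)
    (D : Finset τ) (Tr : τ → Finset ι) (q : ι → τ → ℕ)
    (hq : ∀ t ∈ D, ∀ i ∈ Tr t, 0 < q i t) (hTr : ∀ t ∈ D, Tr t ⊆ I)
    (X : Finset ι) (hXcard : X.card = 2) (hXI : X ⊆ I)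
    (hX : X.Nonempty)
    (hlow : TWU pr q Tr D X < MIU mu X hX) :
    ∀ (Y : Finset ι) (hXY : X ⊆ Y), Y ⊆ I → 3 ≤ Y.card →
      (∀ j ∈ Y \ X, ∀ i ∈ X, mu j ≥ mu i) →
      TWU pr q Tr D Y < MIU mu Y (hX.mono hXY) ∧
        dbU pr q Tr D Y < MIU mu Y (hX.mono hXY) := by
  intro Y hXY hYI hYcard hmuY
  have hitem : ∀ i t, 0 ≤ itemU pr q i t := fun i t =>
    mul_nonneg (Nat.cast_nonneg _) (hpr i)
  have hMIU : MIU mu Y (hX.mono hXY) = MIU mu X hX := by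
    apply le_antisymm
    · exact Finset.inf'_mono (f := mu) hXY hX
    · apply Finset.le_inf'
      intro j hj
      by_cases hjX : j ∈ X
      · exact Finset.inf'_le mu hjX
      · obtain ⟨i, hi⟩ := hX
        exact le_trans (Finset.inf'_le mu hi) (hmuY j (Finset.mem_sdiff.mpr ⟨hj, hjX⟩) i hi)
  have hTWU : TWU pr q Tr D Y ≤ TWU pr q Tr D X := by
    apply Finset.sum_le_sum_of_subset_of_nonneg
    · intro t ht
      rw [Finset.mem_filter] at *
      exact ⟨ht.1, hXY.trans ht.2⟩
    · intro t _ _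
      exact Finset.sum_nonneg fun i _ => hitem i t
  have hdb : dbU pr q Tr D Y ≤ TWU pr q Tr D Y := by
    apply Finset.sum_le_sum
    intro t ht
    have hYt : Y ⊆ Tr t := (Finset.mem_filter.mp ht).2
    exact Finset.sum_le_sum_of_subset_of_nonneg hYt fun i _ _ => hitem i t
  rw [hMIU]
  exact ⟨lt_of_le_of_lt hTWU hlow, lt_of_le_of_lt (hdb.trans hTWU) hlow⟩
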